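/- Let f ∈ Z_p[[X]] be a nonzero power series with μ-invariant μ and λ-invariant λ (via Weierstrass preparation: f = p^μ · U · P with U a unit and P distinguished of degree λ). Then for all sufficiently large n, ord_p(f(ζ_{p^n} − 1)) = μ + λ/(p^n − p^{n−1}). -/

import Mathlib

open PowerSeries

/-- Let `f ∈ ℤ_p[[X]]` be nonzero with Weierstrass factorization `f = p^μ · U · P`,
`U` a unit and `P` distinguished of degree `λ`.  Then, evaluating `f` (as a convergent
series in a complete normed field `K` extending `ℤ_p` isometrically) at `ζ_{p^n} - 1`
for `ζ_{p^n}` a primitive `p^n`-th root of unity (which has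
`ord_p(ζ_{p^n} - 1) = 1/(p^{n-1}(p-1))`, i.e. `‖ζ_{p^n}-1‖ = p^{-1/(p^{n-1}(p-1))}`),
one has, for all sufficiently large `n`,
`ord_p (f(ζ_{p^n} - 1)) = μ + λ/(p^n - p^{n-1})`, stated here multiplicatively as
`‖f(ζ_{p^n}-1)‖ = p^{-(μ + λ/(p^n - p^{n-1}))}`. -/
theorem stmt5 (p : ℕ) [Fact p.Prime]
    (K : Type) [NormedField K] [CompleteSpace K] [Algebra ℤ_[p] K]
    (halg : ∀ a : ℤ_[p], ‖algebraMap ℤ_[p] K a‖ = ‖a‖)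
    (f : PowerSeries ℤ_[p]) (hf : f ≠ 0)
    (μ lam : ℕ) (U : (PowerSeries ℤ_[p])ˣ) (P : Polynomial ℤ_[p])
    (hPmonic : P.Monic) (hPdeg : P.natDegree = lam)
    (hPdist : ∀ i < lam, ‖P.coeff i‖ < 1)
    (hfact : f = (p : PowerSeries ℤ_[p]) ^ μ * (U : PowerSeries ℤ_[p]) * (P : PowerSeries ℤ_[p])) :
    ∃ N : ℕ, ∀ n ≥ N, ∀ ζ : K, IsPrimitiveRoot ζ (p ^ n) →
      ‖ζ - 1‖ = (p : ℝ) ^ (-(1 / ((p : ℝ) ^ (n - 1) * ((p : ℝ) - 1)))) →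
      ‖∑' k : ℕ, algebraMap ℤ_[p] K (PowerSeries.coeff (R := ℤ_[p]) k f) * (ζ - 1) ^ k‖ =
        (p : ℝ) ^ (-((μ : ℝ) + (lam : ℝ) / ((p : ℝ) ^ n - (p : ℝ) ^ (n - 1)))) := by
  classical
  have hp : p.Prime := Fact.out
  have hp1 : (1 : ℝ) < p := by exact_mod_cast hp.one_lt
  have hp0 : (0 : ℝ) < p := lt_trans one_pos hp1
  have hp2 : (2 : ℝ) ≤ p := by exact_mod_cast hp.two_le
  haveI : IsUltrametricDist K := by
    apply IsUltrametricDist.isUltrametricDist_of_forall_norm_natCast_le_one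
    intro m
    rw [← map_natCast (algebraMap ℤ_[p] K) m, halg]
    exact PadicInt.norm_le_one _
  refine ⟨lam + 1, fun n hn ζ _ hζ => ?_⟩
  have hn1 : 1 ≤ n := le_trans (Nat.le_add_left 1 lam) hn
  set σ := algebraMap ℤ_[p] K with hσ
  set x : K := ζ - 1 with hxdef
  set ε : ℝ := 1 / ((p : ℝ) ^ (n - 1) * ((p : ℝ) - 1)) with hεdef
  have hD0 : (0 : ℝ) < (p : ℝ) ^ (n - 1) * ((p : ℝ) - 1) :=
    mul_pos (pow_pos hp0 _) (by linarith)
  have hε0 : 0 < ε := by rw [hεdef]; positivity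
  -- lam * ε < 1
  have hlamlt : (lam : ℝ) < (p : ℝ) ^ (n - 1) * ((p : ℝ) - 1) := by
    have h1 : lam < n := by omega
    have h2 : n ≤ 2 ^ (n - 1) := by
      have := Nat.lt_two_pow_self (n := n - 1); omega
    have h3 : (2 : ℕ) ^ (n - 1) ≤ p ^ (n - 1) := Nat.pow_le_pow_left hp.two_le _
    have h4 : (lam : ℝ) < (p : ℝ) ^ (n - 1) := by
      have : lam < p ^ (n - 1) := lt_of_lt_of_le (lt_of_lt_of_le h1 h2) h3
      exact_mod_cast this
    have h5 : (p : ℝ) ^ (n - 1) ≤ (p : ℝ) ^ (n - 1) * ((p : ℝ) - 1) :=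
      le_mul_of_one_le_right (pow_pos hp0 _).le (by linarith)
    linarith
  have hεlam : (lam : ℝ) * ε < 1 := by
    rw [hεdef, mul_one_div, div_lt_one hD0]; exact hlamlt
  have hx : ‖x‖ = (p : ℝ) ^ (-ε) := hζ
  have hr0 : (0 : ℝ) < ‖x‖ := by rw [hx]; exact Real.rpow_pos_of_pos hp0 _
  have hr1 : ‖x‖ < 1 := by
    rw [hx]; exact Real.rpow_lt_one_of_one_lt_of_neg hp1 (by linarith)
  have hterm : ∀ (g : ℕ → ℤ_[p]) (k : ℕ), ‖σ (g k) * x ^ k‖ ≤ ‖x‖ ^ k := by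
    intro g k
    rw [norm_mul, norm_pow, hσ, halg]
    exact mul_le_of_le_one_left (pow_nonneg hr0.le k) (PadicInt.norm_le_one _)
  have hgeo : Summable (fun k : ℕ => ‖x‖ ^ k) := summable_geometric_of_lt_one hr0.le hr1
  have hsummable : ∀ g : ℕ → ℤ_[p], Summable (fun k => σ (g k) * x ^ k) := fun g =>
    Summable.of_norm_bounded hgeo (hterm g)
  have hsummable_norm : ∀ g : ℕ → ℤ_[p], Summable (fun k => ‖σ (g k) * x ^ k‖) := fun g =>
    Summable.of_nonneg_of_le (fun _ => norm_nonneg _) (hterm g) hgeo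
  -- Cauchy product
  have hkey : (∑' k : ℕ, σ (PowerSeries.coeff k ((p : PowerSeries ℤ_[p]) ^ μ * U)) * x ^ k) *
      (∑' k : ℕ, σ (PowerSeries.coeff k (P : PowerSeries ℤ_[p])) * x ^ k) =
      ∑' k : ℕ, σ (PowerSeries.coeff k f) * x ^ k := by
    rw [tsum_mul_tsum_eq_tsum_sum_antidiagonal_of_summable_norm (hsummable_norm _)
      (hsummable_norm _)]
    apply tsum_congr
    intro k
    rw [hfact, PowerSeries.coeff_mul, map_sum σ, Finset.sum_mul]
    refine Finset.sum_congr rfl fun ij hij => ?_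
    rw [map_mul σ, ← Finset.HasAntidiagonal.mem_antidiagonal.mp hij, pow_add]
    ring
  -- the U-factor
  have hAeq : (∑' k : ℕ, σ (PowerSeries.coeff k ((p : PowerSeries ℤ_[p]) ^ μ * U)) * x ^ k) =
      σ ((p : ℤ_[p]) ^ μ) * ∑' k : ℕ, σ (PowerSeries.coeff k (U : PowerSeries ℤ_[p])) * x ^ k := by
    rw [← tsum_mul_left]
    apply tsum_congr
    intro k
    have hc : ((p : PowerSeries ℤ_[p]) ^ μ) = PowerSeries.C ((p : ℤ_[p]) ^ μ) := by
      rw [map_pow, map_natCast]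
    rw [hc, PowerSeries.coeff_C_mul, map_mul σ]
    ring
  have hU0 : ‖σ (PowerSeries.coeff 0 (U : PowerSeries ℤ_[p]))‖ = 1 := by
    rw [hσ, halg]
    refine PadicInt.isUnit_iff.mp ?_
    have h := (Units.isUnit U).map (PowerSeries.constantCoeff)
    simpa [PowerSeries.coeff_zero_eq_constantCoeff] using h
  have hUsum : ‖∑' k : ℕ, σ (PowerSeries.coeff k (U : PowerSeries ℤ_[p])) * x ^ k‖ = 1 := by
    rw [Summable.tsum_eq_zero_add (hsummable _)]
    have htail : ‖∑' k : ℕ,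
        σ (PowerSeries.coeff (k + 1) (U : PowerSeries ℤ_[p])) * x ^ (k + 1)‖ ≤ ‖x‖ := by
      refine IsUltrametricDist.norm_tsum_le_of_forall_le_of_nonneg hr0.le fun k => ?_
      rw [norm_mul, norm_pow, hσ, halg]
      calc ‖PowerSeries.coeff (k + 1) (U : PowerSeries ℤ_[p])‖ * ‖x‖ ^ (k + 1)
          ≤ 1 * ‖x‖ ^ (k + 1) :=
            mul_le_mul_of_nonneg_right (PadicInt.norm_le_one _) (pow_nonneg hr0.le _)
        _ = ‖x‖ ^ (k + 1) := one_mul _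
        _ ≤ ‖x‖ ^ 1 := pow_le_pow_of_le_one hr0.le hr1.le (by omega)
        _ = ‖x‖ := pow_one _
    have hne : ‖σ (PowerSeries.coeff 0 (U : PowerSeries ℤ_[p])) * x ^ 0‖ ≠
        ‖∑' k : ℕ, σ (PowerSeries.coeff (k + 1) (U : PowerSeries ℤ_[p])) * x ^ (k + 1)‖ := by
      rw [pow_zero, mul_one, hU0]
      exact ne_of_gt (lt_of_le_of_lt htail hr1)
    rw [IsUltrametricDist.norm_add_eq_max_of_norm_ne_norm hne, pow_zero, mul_one, hU0]
    exact max_eq_left (le_trans htail hr1.le)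
  -- the P-factor
  have hBeq : (∑' k : ℕ, σ (PowerSeries.coeff k (P : PowerSeries ℤ_[p])) * x ^ k) =
      (∑ k ∈ Finset.range lam, σ (P.coeff k) * x ^ k) + x ^ lam := by
    rw [tsum_eq_sum (s := Finset.range (lam + 1)) (by
      intro k hk
      have hklam : lam < k := by
        simp only [Finset.mem_range] at hk; omega
      rw [Polynomial.coeff_coe, Polynomial.coeff_eq_zero_of_natDegree_lt (hPdeg ▸ hklam),
        map_zero, zero_mul])]
    rw [Finset.sum_range_succ]
    congr 1
    · exact Finset.sum_congr rfl fun k _ => by rw [Polynomial.coeff_coe]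
    · have h1 : P.coeff lam = 1 := by
        have := hPmonic.coeff_natDegree
        rwa [hPdeg] at this
      rw [Polynomial.coeff_coe, h1, map_one, one_mul]
  have hrlam : ‖x‖ ^ lam = (p : ℝ) ^ (-(ε * lam)) := by
    rw [hx, ← Real.rpow_natCast ((p : ℝ) ^ (-ε)) lam, ← Real.rpow_mul hp0.le, neg_mul]
  have hplt : (p : ℝ)⁻¹ < ‖x‖ ^ lam := by
    rw [hrlam, ← Real.rpow_neg_one]
    rw [Real.rpow_lt_rpow_left_iff hp1]
    nlinarith
  have hlow : ‖∑ k ∈ Finset.range lam, σ (P.coeff k) * x ^ k‖ ≤ (p : ℝ)⁻¹ := by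
    refine IsUltrametricDist.norm_sum_le_of_forall_le_of_nonneg (by positivity) fun i hi => ?_
    rw [norm_mul, norm_pow, hσ, halg]
    have hci : ‖P.coeff i‖ ≤ (p : ℝ)⁻¹ := by
      obtain ⟨y, hy⟩ := (PadicInt.norm_lt_one_iff_dvd _).mp (hPdist i (Finset.mem_range.mp hi))
      rw [hy, norm_mul, PadicInt.norm_p]
      exact mul_le_of_le_one_right (by positivity) (PadicInt.norm_le_one y)
    calc ‖P.coeff i‖ * ‖x‖ ^ i ≤ (p : ℝ)⁻¹ * 1 :=
          mul_le_mul hci (pow_le_one₀ hr0.le hr1.le) (by positivity) (by positivity)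
      _ = (p : ℝ)⁻¹ := mul_one _
  have hB : ‖(∑ k ∈ Finset.range lam, σ (P.coeff k) * x ^ k) + x ^ lam‖ = ‖x‖ ^ lam := by
    have hne : ‖∑ k ∈ Finset.range lam, σ (P.coeff k) * x ^ k‖ ≠ ‖x ^ lam‖ := by
      rw [norm_pow]
      exact ne_of_lt (lt_of_le_of_lt hlow hplt)
    rw [IsUltrametricDist.norm_add_eq_max_of_norm_ne_norm hne, norm_pow]
    exact max_eq_right (le_of_lt (lt_of_le_of_lt hlow hplt))
  -- put everything together
  have hApow : ‖σ ((p : ℤ_[p]) ^ μ)‖ = (p : ℝ) ^ (-(μ : ℝ)) := by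
    rw [hσ, halg, PadicInt.norm_p_pow, ← Real.rpow_intCast]
    norm_num
  rw [← hkey, norm_mul, hAeq, norm_mul, hUsum, mul_one, hBeq, hB, hApow, hrlam,
    ← Real.rpow_add hp0]
  congr 1
  have hpn : (p : ℝ) ^ n = (p : ℝ) ^ (n - 1) * (p : ℝ) := by
    rw [← pow_succ]
    congr 1
    omega
  have hDeq : (p : ℝ) ^ n - (p : ℝ) ^ (n - 1) = (p : ℝ) ^ (n - 1) * ((p : ℝ) - 1) := by
    rw [hpn]; ring
  rw [hDeq, hεdef]
  ring
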